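/- Let X be a Banach space, T a bounded linear operator on X with relatively weakly compact orbits, and A a bounded operator on X such that {A Tⁿ x : n ∈ ℕ} is relatively norm compact for every x ∈ X. Let K ⊆ X be relatively norm compact and suppose there exists a sequence (n_j) of density 1 in ℕ such that T^{n_j} y → 0 weakly for every y ∈ K. Then ‖A T^{n_j} y‖ → 0 as j → ∞ uniformly in y ∈ K, and consequently lim_{N→∞} (1/N) ∑_{n=1}^N ‖A Tⁿ y‖ = 0 for every y ∈ K. -/

import Mathlib

open Filter Topology

variable {X : Type*} [NormedAddCommGroup X] [NormedSpace ℂ X]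

/-- A set `M ⊆ ℕ` has density one if `|M ∩ {1,…,N}| / N → 1`. -/
def NatDensityOne (M : Set ℕ) : Prop :=
  Tendsto
    (fun N : ℕ => (∑ n ∈ Finset.Icc 1 N, Set.indicator M (fun _ => (1 : ℝ)) n) / N)
    atTop (nhds 1)

/-- An operator has relatively weakly compact orbits if every orbit `{Tⁿx : n ∈ ℕ}` is
relatively compact in the weak topology of `X`. -/
def RelWeaklyCompactOrbits (T : X →L[ℂ] X) : Prop :=
  ∀ x : X, IsCompact (closure (Set.range fun n : ℕ => toWeakSpace ℂ X ((T ^ n) x)))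

/-- Uniform bound on the powers of an operator with relatively weakly compact orbits. -/
lemma aux_unif_bound [CompleteSpace X] (T : X →L[ℂ] X) (hT : RelWeaklyCompactOrbits T) :
    ∃ C : ℝ, 0 ≤ C ∧ ∀ n : ℕ, ‖T ^ n‖ ≤ C := by
  have hpt : ∀ x : X, ∃ C, ∀ n : ℕ, ‖(T ^ n) x‖ ≤ C := by
    intro x
    have hφ : ∀ φ : X →L[ℂ] ℂ, ∃ C, ∀ n : ℕ,
        ‖(NormedSpace.inclusionInDoubleDual ℂ X ((T ^ n) x)) φ‖ ≤ C := by
      intro φ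
      have hc : Continuous fun z : WeakSpace ℂ X => (topDualPairing ℂ X).flip z φ :=
        WeakBilin.eval_continuous _ φ
      obtain ⟨R, hR⟩ := ((hT x).image hc).isBounded.exists_norm_le
      refine ⟨R, fun n => ?_⟩
      exact hR _ ⟨toWeakSpace ℂ X ((T ^ n) x),
        subset_closure (Set.mem_range_self n), rfl⟩
    obtain ⟨C, hC⟩ := banach_steinhaus
      (g := fun n : ℕ => NormedSpace.inclusionInDoubleDual ℂ X ((T ^ n) x)) hφ
    refine ⟨C, fun n => ?_⟩
    calc ‖(T ^ n) x‖ = ‖NormedSpace.inclusionInDoubleDual ℂ X ((T ^ n) x)‖ :=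
          ((NormedSpace.inclusionInDoubleDualLi ℂ (E := X)).norm_map _).symm
      _ ≤ C := hC n
  obtain ⟨C, hC⟩ := banach_steinhaus (g := fun n : ℕ => T ^ n) hpt
  exact ⟨max C 0, le_max_right _ _, fun n => le_max_of_le_left (hC n)⟩

/-- Pointwise strong convergence along `M`. -/
lemma aux_pointwise (T A : X →L[ℂ] X) {y : X}
    (hAy : IsCompact (closure (Set.range fun n : ℕ => A ((T ^ n) y))))
    (M : Set ℕ)
    (hw : ∀ φ : X →L[ℂ] ℂ, Tendsto (fun n : ℕ => φ ((T ^ n) y)) (atTop ⊓ 𝓟 M) (nhds 0)) :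
    Tendsto (fun n : ℕ => ‖A ((T ^ n) y)‖) (atTop ⊓ 𝓟 M) (nhds 0) := by
  have hvec : Tendsto (fun n : ℕ => A ((T ^ n) y)) (atTop ⊓ 𝓟 M) (nhds 0) := by
    by_contra hcon
    rw [Metric.tendsto_nhds] at hcon
    push_neg at hcon
    obtain ⟨ε, hε, hfreq⟩ := hcon
    have hfreq' : ∃ᶠ n in atTop ⊓ 𝓟 M, ¬ dist (A ((T ^ n) y)) 0 < ε :=
      hfreq.mono (fun n hn => not_lt.mpr hn)
    have hfreq2 : ∃ᶠ n in atTop, n ∈ M ∧ ε ≤ dist (A ((T ^ n) y)) 0 := by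
      have := Filter.frequently_inf_principal.mp hfreq'
      exact this.mono (fun n hn => ⟨hn.1, not_lt.mp hn.2⟩)
    obtain ⟨φ, hφmono, hφ⟩ := Filter.extraction_of_frequently_atTop hfreq2
    obtain ⟨z, hzmem, ψ, hψmono, hconv⟩ := hAy.tendsto_subseq
      (x := fun k => A ((T ^ (φ k)) y))
      (fun k => subset_closure (Set.mem_range_self (φ k)))
    have hznorm : ε ≤ ‖z‖ :=
      ge_of_tendsto' hconv.norm
        (fun k => by simpa [dist_zero_right] using (hφ (ψ k)).2)
    have hz0 : z = 0 := by
      apply NormedSpace.eq_zero_of_forall_dual_eq_zero ℂ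
      intro g
      have h1 : Tendsto (fun n : ℕ => (g.comp A) ((T ^ n) y)) (atTop ⊓ 𝓟 M) (nhds 0) :=
        hw (g.comp A)
      have h2 : Tendsto (fun k : ℕ => φ (ψ k)) atTop (atTop ⊓ 𝓟 M) := by
        refine tendsto_inf.mpr ⟨(hφmono.comp hψmono).tendsto_atTop, ?_⟩
        exact tendsto_principal.mpr (Eventually.of_forall fun k => (hφ (ψ k)).1)
      have h3 : Tendsto (fun k : ℕ => g (A ((T ^ (φ (ψ k))) y))) atTop (nhds 0) :=
        h1.comp h2
      have h4 : Tendsto (fun k : ℕ => g (A ((T ^ (φ (ψ k))) y))) atTop (nhds (g z)) :=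
        (g.continuous.tendsto z).comp hconv
      exact tendsto_nhds_unique h4 h3
    rw [hz0, norm_zero] at hznorm
    exact absurd hznorm (not_le.mpr hε)
  have := hvec.norm
  simpa using this

/-- Let `T` have relatively weakly compact orbits, let `A` be such that `{A Tⁿ x : n}` is
relatively norm compact for every `x`, and let `K` be relatively norm compact.  If `Tⁿ y → 0`
weakly along a density-one set `M` for every `y ∈ K`, then `‖A Tⁿ y‖ → 0` along `M` uniformly
in `y ∈ K`, and consequently `(1/N) ∑_{n=1}^N ‖A Tⁿ y‖ → 0` for every `y ∈ K`. -/
theorem uniform_strong_convergence_on_compact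
    [CompleteSpace X] (T A : X →L[ℂ] X) (hT : RelWeaklyCompactOrbits T)
    (hA : ∀ x : X, IsCompact (closure (Set.range fun n : ℕ => A ((T ^ n) x))))
    (K : Set X) (hK : IsCompact (closure K))
    (M : Set ℕ) (hM : NatDensityOne M)
    (hweak : ∀ y ∈ K, ∀ φ : X →L[ℂ] ℂ,
      Tendsto (fun n : ℕ => φ ((T ^ n) y)) (atTop ⊓ 𝓟 M) (nhds 0)) :
    (∀ ε : ℝ, 0 < ε → ∃ N₀ : ℕ, ∀ n ∈ M, N₀ ≤ n → ∀ y ∈ K, ‖A ((T ^ n) y)‖ < ε) ∧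
    (∀ y ∈ K,
      Tendsto (fun N : ℕ => (∑ n ∈ Finset.Icc 1 N, ‖A ((T ^ n) y)‖) / N) atTop (nhds 0)) := by
  obtain ⟨C, hC0, hC⟩ := aux_unif_bound T hT
  -- Part 1: uniform convergence on K along M
  have part1 : ∀ ε : ℝ, 0 < ε → ∃ N₀ : ℕ, ∀ n ∈ M, N₀ ≤ n → ∀ y ∈ K,
      ‖A ((T ^ n) y)‖ < ε := by
    intro ε hε
    set δ : ℝ := ε / (2 * (‖A‖ * C + 1)) with hδdef
    have hδpos : 0 < δ := by positivity
    -- cover closure K by δ-balls centered in K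
    have hcover : closure K ⊆ ⋃ y ∈ K, Metric.ball y δ := by
      intro z hz
      obtain ⟨y, hyK, hd⟩ := Metric.mem_closure_iff.mp hz δ hδpos
      exact Set.mem_biUnion hyK (by simpa [Metric.mem_ball, dist_comm] using hd)
    obtain ⟨t, htK, htfin, htcover⟩ :=
      hK.elim_finite_subcover_image (fun y _ => Metric.isOpen_ball) hcover
    -- for each center, pointwise convergence
    have hev : ∀ᶠ n in atTop ⊓ 𝓟 M, ∀ y ∈ t, ‖A ((T ^ n) y)‖ < ε / 2 := by
      rw [eventually_all_finite htfin]
      intro y hyt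
      exact (aux_pointwise T A (hA y) M (hweak y (htK hyt))).eventually_lt_const
        (by positivity)
    rw [eventually_inf_principal] at hev
    obtain ⟨N₀, hN₀⟩ := eventually_atTop.mp hev
    refine ⟨N₀, fun n hnM hn y hyK => ?_⟩
    obtain ⟨y₀, hy₀t, hyball⟩ := Set.mem_iUnion₂.mp (htcover (subset_closure hyK))
    have h1 : ‖A ((T ^ n) y₀)‖ < ε / 2 := hN₀ n hn hnM y₀ hy₀t
    have h2 : ‖A ((T ^ n) y) - A ((T ^ n) y₀)‖ ≤ ‖A‖ * (C * ‖y - y₀‖) := by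
      have : A ((T ^ n) y) - A ((T ^ n) y₀) = A ((T ^ n) (y - y₀)) := by
        simp [map_sub]
      rw [this]
      calc ‖A ((T ^ n) (y - y₀))‖ ≤ ‖A‖ * ‖(T ^ n) (y - y₀)‖ := A.le_opNorm _
        _ ≤ ‖A‖ * (‖T ^ n‖ * ‖y - y₀‖) := by
            gcongr; exact (T ^ n).le_opNorm _
        _ ≤ ‖A‖ * (C * ‖y - y₀‖) := by gcongr; exact hC n
    have hyd : ‖y - y₀‖ < δ := by
      simpa [dist_eq_norm] using Metric.mem_ball.mp hyball
    have hA0 : (0:ℝ) ≤ ‖A‖ := norm_nonneg _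
    have key : ‖A ((T ^ n) y)‖ ≤ ‖A ((T ^ n) y₀)‖ + ‖A‖ * (C * ‖y - y₀‖) := by
      calc ‖A ((T ^ n) y)‖
          ≤ ‖A ((T ^ n) y₀)‖ + ‖A ((T ^ n) y) - A ((T ^ n) y₀)‖ := by
            have := norm_add_le (A ((T ^ n) y₀)) (A ((T ^ n) y) - A ((T ^ n) y₀))
            simpa using this
        _ ≤ _ := by gcongr
    have hAC : ‖A‖ * (C * ‖y - y₀‖) ≤ (‖A‖ * C + 1) * δ := by
      have h0 : (0:ℝ) ≤ ‖y - y₀‖ := norm_nonneg _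
      nlinarith [mul_nonneg hA0 hC0]
    have hδeq : (‖A‖ * C + 1) * δ = ε / 2 := by
      rw [hδdef]; field_simp
    linarith
  refine ⟨part1, ?_⟩
  -- Part 2: Cesàro averages
  intro y hy
  set D : ℝ := ‖A‖ * (C * ‖y‖) + 1 with hDdef
  have hD1 : (1:ℝ) ≤ D := by
    have : (0:ℝ) ≤ ‖A‖ * (C * ‖y‖) := by positivity
    linarith
  have hD0 : (0:ℝ) < D := lt_of_lt_of_le one_pos hD1
  have hD : ∀ n : ℕ, ‖A ((T ^ n) y)‖ ≤ D := by
    intro n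
    calc ‖A ((T ^ n) y)‖ ≤ ‖A‖ * ‖(T ^ n) y‖ := A.le_opNorm _
      _ ≤ ‖A‖ * (‖T ^ n‖ * ‖y‖) := by gcongr; exact (T ^ n).le_opNorm _
      _ ≤ ‖A‖ * (C * ‖y‖) := by gcongr; exact hC n
      _ ≤ D := by linarith
  set m : ℕ → ℝ := fun N => ∑ n ∈ Finset.Icc 1 N, Set.indicator M (fun _ => (1:ℝ)) n
    with hmdef
  have hind01 : ∀ n, 0 ≤ Set.indicator M (fun _ => (1:ℝ)) n ∧
      Set.indicator M (fun _ => (1:ℝ)) n ≤ 1 := by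
    intro n; by_cases h : n ∈ M <;> simp [Set.indicator, h]
  have hmle : ∀ N : ℕ, m N ≤ N := by
    intro N
    calc m N ≤ ∑ _n ∈ Finset.Icc 1 N, (1:ℝ) :=
      Finset.sum_le_sum (fun n _ => (hind01 n).2)
    _ = N := by simp
  rw [Metric.tendsto_nhds]
  intro ε hε
  obtain ⟨N₀, hN₀⟩ := part1 (ε / 3) (by positivity)
  have h1ev : ∀ᶠ N : ℕ in atTop, dist (m N / N) 1 < ε / (3 * D) :=
    (Metric.tendsto_nhds.mp hM) (ε / (3 * D)) (by positivity)
  have h2ev : ∀ᶠ N : ℕ in atTop, D * N₀ / N < ε / 3 :=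
    (tendsto_const_div_atTop_nhds_zero_nat (D * N₀)).eventually_lt_const (by positivity)
  filter_upwards [h1ev, h2ev, eventually_ge_atTop 1] with N h1 h2 hN1
  have hNpos : (0:ℝ) < N := by exact_mod_cast hN1
  -- termwise bound
  have hterm : ∀ n : ℕ, ‖A ((T ^ n) y)‖ ≤ ε / 3
      + D * Set.indicator Mᶜ (fun _ => (1:ℝ)) n
      + D * Set.indicator {k : ℕ | k < N₀} (fun _ => (1:ℝ)) n := by
    intro n
    have hε3 : (0:ℝ) ≤ ε / 3 := by positivity
    by_cases hnM : n ∈ M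
    · by_cases hn0 : N₀ ≤ n
      · have := le_of_lt (hN₀ n hnM hn0 y hy)
        have i1 : (0:ℝ) ≤ Set.indicator Mᶜ (fun _ => (1:ℝ)) n := by
          by_cases h : n ∈ Mᶜ <;> simp [Set.indicator, h]
        have i2 : (0:ℝ) ≤ Set.indicator {k : ℕ | k < N₀} (fun _ => (1:ℝ)) n := by
          by_cases h : n ∈ {k : ℕ | k < N₀} <;> simp [Set.indicator, h]
        nlinarith
      · have hmem : n ∈ {k : ℕ | k < N₀} := not_le.mp hn0
        have i1 : (0:ℝ) ≤ Set.indicator Mᶜ (fun _ => (1:ℝ)) n := by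
          by_cases h : n ∈ Mᶜ <;> simp [Set.indicator, h]
        have : Set.indicator {k : ℕ | k < N₀} (fun _ => (1:ℝ)) n = 1 :=
          Set.indicator_of_mem hmem _
        rw [this]
        have := hD n
        nlinarith
    · have hmemc : n ∈ Mᶜ := hnM
      have : Set.indicator Mᶜ (fun _ => (1:ℝ)) n = 1 := Set.indicator_of_mem hmemc _
      rw [this]
      have i2 : (0:ℝ) ≤ Set.indicator {k : ℕ | k < N₀} (fun _ => (1:ℝ)) n := by
        by_cases h : n ∈ {k : ℕ | k < N₀} <;> simp [Set.indicator, h]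
      have := hD n
      nlinarith
  -- sum bounds
  have hsum_compl : ∑ n ∈ Finset.Icc 1 N, Set.indicator Mᶜ (fun _ => (1:ℝ)) n
      = N - m N := by
    have : ∀ n ∈ Finset.Icc 1 N, Set.indicator Mᶜ (fun _ => (1:ℝ)) n
        = 1 - Set.indicator M (fun _ => (1:ℝ)) n := by
      intro n _
      by_cases h : n ∈ M <;> simp [Set.indicator, h]
    rw [Finset.sum_congr rfl this, Finset.sum_sub_distrib]
    simp [hmdef]
  have hsum_lt : ∑ n ∈ Finset.Icc 1 N, Set.indicator {k : ℕ | k < N₀} (fun _ => (1:ℝ)) n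
      ≤ N₀ := by
    classical
    have step : ∀ n ∈ Finset.Icc 1 N, Set.indicator {k : ℕ | k < N₀} (fun _ => (1:ℝ)) n
        = if n < N₀ then (1:ℝ) else 0 := by
      intro n _
      by_cases h : n < N₀ <;> simp [Set.indicator, h]
    rw [Finset.sum_congr rfl step, Finset.sum_boole]
    have hsub : (Finset.Icc 1 N).filter (fun n => n < N₀) ⊆ Finset.range N₀ := by
      intro n hn
      simp only [Finset.mem_filter] at hn
      exact Finset.mem_range.mpr hn.2
    have := Finset.card_le_card hsub
    simp only [Finset.card_range] at this
    exact_mod_cast this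
  have hsum : (∑ n ∈ Finset.Icc 1 N, ‖A ((T ^ n) y)‖)
      ≤ N * (ε / 3) + D * (N - m N) + D * N₀ := by
    calc (∑ n ∈ Finset.Icc 1 N, ‖A ((T ^ n) y)‖)
        ≤ ∑ n ∈ Finset.Icc 1 N, (ε / 3
          + D * Set.indicator Mᶜ (fun _ => (1:ℝ)) n
          + D * Set.indicator {k : ℕ | k < N₀} (fun _ => (1:ℝ)) n) :=
          Finset.sum_le_sum (fun n _ => hterm n)
      _ = N * (ε / 3)
          + D * (∑ n ∈ Finset.Icc 1 N, Set.indicator Mᶜ (fun _ => (1:ℝ)) n)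
          + D * (∑ n ∈ Finset.Icc 1 N, Set.indicator {k : ℕ | k < N₀} (fun _ => (1:ℝ)) n) := by
          rw [Finset.sum_add_distrib, Finset.sum_add_distrib, ← Finset.mul_sum,
            ← Finset.mul_sum, Finset.sum_const, Nat.card_Icc]
          simp [nsmul_eq_mul]
      _ ≤ N * (ε / 3) + D * (N - m N) + D * N₀ := by
          rw [hsum_compl]
          gcongr
  -- now conclude
  have havg_nonneg : 0 ≤ (∑ n ∈ Finset.Icc 1 N, ‖A ((T ^ n) y)‖) / N := by
    apply div_nonneg _ (le_of_lt hNpos)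
    exact Finset.sum_nonneg (fun n _ => norm_nonneg _)
  rw [Real.dist_eq, sub_zero, abs_of_nonneg havg_nonneg]
  have havg : (∑ n ∈ Finset.Icc 1 N, ‖A ((T ^ n) y)‖) / N
      ≤ ε / 3 + D * ((N - m N) / N) + D * N₀ / N := by
    rw [div_le_iff₀ hNpos]
    have e1 : (ε / 3 + D * ((N - m N) / N) + D * N₀ / N) * N
        = N * (ε / 3) + D * (N - m N) + D * N₀ := by
      field_simp
    rw [e1]
    exact hsum
  have hdist : D * ((N - m N) / N) < ε / 3 := by
    have hmN : m N ≤ N := hmle N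
    have heq : (N - m N) / N = dist (m N / N) 1 := by
      rw [Real.dist_eq, abs_of_nonpos, neg_sub]
      · rw [sub_div, div_self (ne_of_gt hNpos)]
      · rw [sub_nonpos, div_le_one hNpos]; exact hmN
    rw [heq]
    calc D * dist (m N / N) 1 < D * (ε / (3 * D)) := by
          apply mul_lt_mul_of_pos_left h1 hD0
      _ = ε / 3 := by field_simp
  linarith
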